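/- Let n = 5 or n ≥ 7 with n ∉ {8, 12, 24}. Then there do not exist nonnegative rational numbers r₁, …, rₙ and signs ε₂, …, εₙ ∈ {−1, +1} such that (n/4)·cot(π/n) = √r₁ + ε₂√r₂ + ⋯ + εₙ√rₙ. -/

import Mathlib

set_option maxHeartbeats 1000000

lemma exists_good_k (n : ℕ) (hn : n = 5 ∨ 7 ≤ n)
    (h8 : n ≠ 8) (h12 : n ≠ 12) (h24 : n ≠ 24) :
    ∃ k : ℕ, Odd k ∧ Nat.Coprime k n ∧ ¬ (n ∣ k ^ 2 - 1) := by
  have hn0 : n ≠ 0 := by omega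
  obtain ⟨m, hmdef⟩ : ∃ m, m = ordCompl[2] n := ⟨_, rfl⟩
  have hmdvd : m ∣ n := hmdef ▸ Nat.ordCompl_dvd n 2
  have hmodd : ¬ (2 ∣ m) := hmdef ▸ Nat.not_dvd_ordCompl Nat.prime_two hn0
  have hmpos : 0 < m := hmdef ▸ Nat.ordCompl_pos 2 hn0
  have hodd_dvd : ∀ p : ℕ, p.Prime → p ∣ n → p ≠ 2 → p ∣ m := by
    intro p hp hpn hp2
    have h := Nat.ordProj_mul_ordCompl_eq_self n 2
    have hpn' : p ∣ 2 ^ (n.factorization 2) * m := by rw [hmdef, h]; exact hpn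
    rcases (Nat.Prime.dvd_mul hp).mp hpn' with h1 | h1
    · exact absurd ((Nat.prime_dvd_prime_iff_eq hp Nat.prime_two).mp
        (hp.dvd_of_dvd_pow h1)) hp2
    · exact h1
  have hm2 : m % 2 = 1 := Nat.not_even_iff.mp (fun h => hmodd h.two_dvd)
  by_cases hm5 : 5 ≤ m
  · -- k = m - 2
    refine ⟨m - 2, ?_, ?_, ?_⟩
    · rw [Nat.odd_iff]; omega
    · by_contra hc
      obtain ⟨p, hp, hpk, hpn⟩ := Nat.Prime.not_coprime_iff_dvd.mp hc
      have hp2 : p ≠ 2 := by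
        rintro rfl
        obtain ⟨t, ht⟩ := hpk
        omega
      have hpm : p ∣ m := hodd_dvd p hp hpn hp2
      have hd2 : p ∣ 2 := by
        have := Nat.dvd_sub hpm hpk
        simpa [Nat.sub_sub_self (by omega : 2 ≤ m)] using this
      exact hp2 ((Nat.prime_dvd_prime_iff_eq hp Nat.prime_two).mp hd2)
    · intro hdvd
      obtain ⟨t, ht⟩ : ∃ t, m = t + 4 := ⟨m - 4, by omega⟩
      subst ht
      have hk2 : (t + 4 - 2) ^ 2 - 1 = (t + 4) * t + 3 := by
        have h42 : t + 4 - 2 = t + 2 := by omega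
        have : (t + 4 - 2) ^ 2 = (t + 4) * t + 3 + 1 := by rw [h42]; ring
        omega
      have hm3 : (t+4) ∣ 3 := by
        have h1 : (t+4) ∣ (t+4) * t + 3 := hk2 ▸ hmdvd.trans hdvd
        exact (Nat.dvd_add_right ⟨t, rfl⟩).mp h1
      have := Nat.le_of_dvd (by norm_num) hm3
      omega
  · -- k = 5
    refine ⟨5, ⟨2, by norm_num⟩, ?_, ?_⟩
    · by_contra hc
      obtain ⟨p, hp, hpk, hpn⟩ := Nat.Prime.not_coprime_iff_dvd.mp hc
      have hp5 : p = 5 := (Nat.prime_dvd_prime_iff_eq hp (by norm_num)).mp hpk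
      subst hp5
      have : (5:ℕ) ∣ m := hodd_dvd 5 hp hpn (by norm_num)
      have := Nat.le_of_dvd hmpos this
      omega
    · intro hdvd
      norm_num at hdvd
      have hle : n ≤ 24 := Nat.le_of_dvd (by norm_num) hdvd
      interval_cases n <;> omega

open Complex in
lemma cot_formula (θ : ℝ) (h : Real.sin θ ≠ 0) :
    Complex.cot θ = Complex.I * (Complex.exp (2 * θ * Complex.I) + 1) /
      (Complex.exp (2 * θ * Complex.I) - 1) := by
  have hsin : Complex.sin θ ≠ 0 := by
    rw [← Complex.ofReal_sin]; exact_mod_cast h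
  have hE : Complex.exp ((θ:ℂ) * Complex.I) ≠ 0 := Complex.exp_ne_zero _
  have h2 : Complex.exp (2 * θ * Complex.I)
      = Complex.exp (θ * Complex.I) * Complex.exp (θ * Complex.I) := by
    rw [← Complex.exp_add]; ring_nf
  have hden : Complex.exp (2 * θ * Complex.I) - 1
      = Complex.exp (θ * Complex.I) * (2 * Complex.I * Complex.sin θ) := by
    rw [h2, Complex.sin, neg_mul, Complex.exp_neg]
    field_simp
    ring_nf
    simp only [Complex.I_sq]
    ring
  have hnum : Complex.exp (2 * θ * Complex.I) + 1
      = Complex.exp (θ * Complex.I) * (2 * Complex.cos θ) := by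
    rw [h2, Complex.cos, neg_mul, Complex.exp_neg]
    field_simp
  rw [Complex.cot_eq_cos_div_sin, hden, hnum]
  rw [div_eq_div_iff hsin (by simp [hE, hsin, Complex.I_ne_zero])]
  ring

lemma cot_nat_mul_pi_add (q : ℕ) (x : ℝ) : Real.cot (q * Real.pi + x) = Real.cot x := by
  have hc : Real.cos (q * Real.pi) = (-1) ^ q := by
    have := Real.cos_nat_mul_pi_sub 0 q
    simpa using this
  rw [Real.cot_eq_cos_div_sin, Real.cot_eq_cos_div_sin, Real.cos_add, Real.sin_add,
      Real.sin_nat_mul_pi, hc]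
  have hne : ((-1:ℝ)) ^ q ≠ 0 := pow_ne_zero _ (by norm_num)
  rw [show (-1:ℝ)^q * Real.cos x - 0 * Real.sin x = (-1:ℝ)^q * Real.cos x by ring,
      show (0:ℝ) * Real.cos x + (-1:ℝ)^q * Real.sin x = (-1:ℝ)^q * Real.sin x by ring,
      mul_div_mul_left _ _ hne]

lemma cot_inj_nat (a b n : ℕ) (ha0 : 0 < a) (han : a < n) (hb0 : 0 < b) (hbn : b < n)
    (h : Real.cot (a * Real.pi / n) = Real.cot (b * Real.pi / n)) : a = b := by
  have hπ : (0:ℝ) < Real.pi := Real.pi_pos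
  have hn0 : (0:ℝ) < n := by exact_mod_cast ha0.trans han
  set x := (a:ℝ) * Real.pi / n with hxdef
  set y := (b:ℝ) * Real.pi / n with hydef
  have hx0 : 0 < x := by positivity
  have hy0 : 0 < y := by positivity
  have hxpi : x < Real.pi := by
    rw [hxdef, div_lt_iff₀ hn0]
    have : (a:ℝ) < n := by exact_mod_cast han
    nlinarith
  have hypi : y < Real.pi := by
    rw [hydef, div_lt_iff₀ hn0]
    have : (b:ℝ) < n := by exact_mod_cast hbn
    nlinarith
  have hsx : Real.sin x ≠ 0 := (Real.sin_pos_of_pos_of_lt_pi hx0 hxpi).ne'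
  have hsy : Real.sin y ≠ 0 := (Real.sin_pos_of_pos_of_lt_pi hy0 hypi).ne'
  rw [Real.cot_eq_cos_div_sin, Real.cot_eq_cos_div_sin, div_eq_div_iff hsx hsy] at h
  have hsub : Real.sin (x - y) = 0 := by
    rw [Real.sin_sub]; nlinarith
  obtain ⟨j, hj⟩ := Real.sin_eq_zero_iff.mp hsub
  have hj' : (j:ℝ) * (n:ℝ) = (a:ℝ) - (b:ℝ) := by
    have hne : Real.pi ≠ 0 := hπ.ne'
    rw [hxdef, hydef] at hj
    field_simp at hj
    apply mul_right_cancel₀ hne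
    nlinarith [hj]
  have hjint : (j * n : ℤ) = (a:ℤ) - (b:ℤ) := by exact_mod_cast hj'
  have : j = 0 := by
    rcases lt_trichotomy j 0 with hl | he | hg
    · nlinarith [hjint, (by exact_mod_cast han : (a:ℤ) < n), (by exact_mod_cast hb0 : (0:ℤ) < b),
        (by omega : j ≤ -1), (by exact_mod_cast hn0 : (0:ℤ) < (n:ℤ))]
    · exact he
    · nlinarith [hjint, (by exact_mod_cast hbn : (b:ℤ) < n), (by exact_mod_cast ha0 : (0:ℤ) < a),
        (by omega : 1 ≤ j), (by exact_mod_cast hn0 : (0:ℤ) < (n:ℤ))]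
  subst this
  simp at hjint
  omega


lemma I_pow_four : Complex.I ^ 4 = 1 := by
  rw [show (4:ℕ) = 2 * 2 from rfl, pow_mul, Complex.I_sq]; norm_num

lemma zeta_pow_cot (n j : ℕ) (hn : 5 ≤ n) (hj4 : j % 4 = 1) (hj : 0 < j % n) :
    (Complex.exp (2 * Real.pi * Complex.I / ((4 * n : ℕ) : ℂ)) ^ j) ^ n *
      (((Complex.exp (2 * Real.pi * Complex.I / ((4 * n : ℕ) : ℂ)) ^ j) ^ 4 + 1) /
       ((Complex.exp (2 * Real.pi * Complex.I / ((4 * n : ℕ) : ℂ)) ^ j) ^ 4 - 1))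
      = ((Real.cot ((j : ℝ) * Real.pi / (n : ℝ)) : ℝ) : ℂ) := by
  have hπ := Real.pi_pos
  have hnR : (0:ℝ) < n := by positivity
  have hnC : ((n:ℕ):ℂ) ≠ 0 := by exact_mod_cast (by omega : n ≠ 0)
  set θ : ℝ := (j : ℝ) * Real.pi / (n : ℝ) with hθdef
  set ζ : ℂ := Complex.exp (2 * Real.pi * Complex.I / ((4 * n : ℕ) : ℂ)) with hζdef
  have h4 : (ζ ^ j) ^ 4 = Complex.exp (2 * (θ : ℝ) * Complex.I) := by
    rw [← pow_mul, hζdef, ← Complex.exp_nat_mul]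
    congr 1
    simp only [hθdef]
    push_cast
    field_simp
  have hexpI : Complex.exp ((Real.pi / 2 : ℝ) * Complex.I) = Complex.I := by
    rw [Complex.exp_mul_I]
    simp [← Complex.ofReal_cos, ← Complex.ofReal_sin]
  have hI : (ζ ^ j) ^ n = Complex.I := by
    rw [← pow_mul, hζdef, ← Complex.exp_nat_mul]
    have harg : ((j * n : ℕ) : ℂ) * (2 * Real.pi * Complex.I / ((4 * n : ℕ) : ℂ))
        = ((j:ℕ):ℂ) * (((Real.pi / 2 : ℝ):ℂ) * Complex.I) := by
      push_cast
      field_simp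
      ring
    rw [harg, Complex.exp_nat_mul, hexpI]
    obtain ⟨t, ht⟩ : ∃ t, j = 4 * t + 1 := ⟨j / 4, by omega⟩
    rw [ht, pow_add, pow_mul, I_pow_four, pow_one, one_pow, one_mul]
  have hsin : Real.sin θ ≠ 0 := by
    have hdec : θ = (j / n : ℕ) * Real.pi + ((j % n : ℕ) * Real.pi / n) := by
      have hj' : (j:ℝ) = (n:ℝ) * ((j / n : ℕ):ℝ) + ((j % n : ℕ):ℝ) := by
        exact_mod_cast congrArg (Nat.cast : ℕ → ℝ) (Nat.div_add_mod j n).symm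
      rw [hθdef, hj']
      field_simp
    have hc : Real.cos ((j / n : ℕ) * Real.pi) = (-1) ^ (j / n) := by
      simpa using Real.cos_nat_mul_pi_sub 0 (j / n)
    have hspos : 0 < Real.sin ((j % n : ℕ) * Real.pi / n) := by
      apply Real.sin_pos_of_pos_of_lt_pi
      · positivity
      · rw [div_lt_iff₀ hnR]
        have : ((j % n : ℕ):ℝ) < (n:ℝ) := by exact_mod_cast Nat.mod_lt _ (by omega : 0 < n)
        nlinarith
    rw [hdec, Real.sin_add, Real.sin_nat_mul_pi, hc]
    have : ((-1:ℝ)) ^ (j / n) ≠ 0 := pow_ne_zero _ (by norm_num)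
    intro hcon
    apply this
    rcases mul_eq_zero.mp (by linarith [hcon] : ((-1:ℝ)) ^ (j / n) * Real.sin ((j % n : ℕ) * Real.pi / n) = 0) with h | h
    · exact h
    · exact absurd h hspos.ne'
  rw [hI, h4, Complex.ofReal_cot, cot_formula θ hsin, mul_div_assoc]


open Polynomial IntermediateField in
lemma exists_sigma (ζ0 : ℂ) {nn : ℕ} (v : Fin nn → ℂ) (k : ℕ)
    (hζint : IsIntegral ℚ ζ0)
    (hvint : ∀ i, IsIntegral ℚ (v i))
    (c : Fin nn → ℚ) (hv2 : ∀ i, (v i) ^ 2 = (c i : ℂ))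
    (hy : aeval (ζ0 ^ k) (minpoly ℚ ζ0) = 0) :
    ∃ σ : ↥(IntermediateField.adjoin ℚ (insert ζ0 (Set.range v))) →ₐ[ℚ] ℂ,
      (∀ x, σ x ∈ IntermediateField.adjoin ℚ (insert ζ0 (Set.range v))) ∧
      σ ⟨ζ0, subset_adjoin ℚ _ (Set.mem_insert _ _)⟩ = ζ0 ^ k ∧
      ∀ i, σ ⟨v i, subset_adjoin ℚ _ (Set.mem_insert_of_mem _ ⟨i, rfl⟩)⟩ = v i ∨
           σ ⟨v i, subset_adjoin ℚ _ (Set.mem_insert_of_mem _ ⟨i, rfl⟩)⟩ = -(v i) := by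
  set S : Set ℂ := insert ζ0 (Set.range v) with hSdef
  have hK : ∀ s ∈ S, IsIntegral ℚ s ∧ ((minpoly ℚ s).map (algebraMap ℚ ℂ)).Splits := by
    intro s hs
    refine ⟨?_, IsAlgClosed.splits _⟩
    rcases hs with rfl | ⟨i, rfl⟩
    · exact hζint
    · exact hvint i
  have hζS : ζ0 ∈ IntermediateField.adjoin ℚ S := subset_adjoin ℚ S (Set.mem_insert _ _)
  obtain ⟨σ, hσζ⟩ := exists_algHom_adjoin_of_splits_of_aeval hK hζS hy
  have hvS : ∀ i, v i ∈ IntermediateField.adjoin ℚ S := fun i =>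
    subset_adjoin ℚ S (Set.mem_insert_of_mem _ ⟨i, rfl⟩)
  have hσs : ∀ i, σ ⟨v i, hvS i⟩ = v i ∨ σ ⟨v i, hvS i⟩ = -(v i) := by
    intro i
    have hsq : (⟨v i, hvS i⟩ : ↥(IntermediateField.adjoin ℚ S)) ^ 2 = ((c i : ℚ) : _) := by
      apply Subtype.ext
      push_cast
      exact hv2 i
    have h1 : (σ ⟨v i, hvS i⟩) ^ 2 = (v i) ^ 2 := by
      rw [← map_pow, hsq, map_ratCast, hv2 i]
    have h2 : (σ ⟨v i, hvS i⟩ - v i) * (σ ⟨v i, hvS i⟩ + v i) = 0 := by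
      linear_combination h1
    rcases mul_eq_zero.mp h2 with h | h
    · exact Or.inl (sub_eq_zero.mp h)
    · exact Or.inr (eq_neg_of_add_eq_zero_left h)
  refine ⟨σ, ?_, hσζ, hσs⟩
  rintro ⟨x, hx⟩
  induction hx using IntermediateField.adjoin_induction with
  | mem y hy =>
    rcases hy with rfl | ⟨i, rfl⟩
    · have h1 : σ ⟨y, _⟩ = y ^ k := hσζ
      erw [h1]
      exact pow_mem hζS k
    · rcases hσs i with h | h
      · have h1 : σ ⟨v i, _⟩ = v i := h
        erw [h1]; exact hvS i
      · have h1 : σ ⟨v i, _⟩ = -(v i) := h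
        erw [h1]; exact neg_mem (hvS i)
  | algebraMap y =>
    have h1 : σ ⟨algebraMap ℚ ℂ y, _⟩ = algebraMap ℚ ℂ y := σ.commutes y
    erw [h1]
    exact (Algebra.algebraMap (R := ℚ) (IntermediateField.adjoin ℚ S) y).2
  | add a b ha hb iha ihb =>
    have h1 : σ ⟨a + b, _⟩ = σ ⟨a, ha⟩ + σ ⟨b, hb⟩ := map_add σ ⟨a, ha⟩ ⟨b, hb⟩
    erw [h1]
    exact add_mem iha ihb
  | inv a ha iha =>
    have h1 : σ ⟨a⁻¹, _⟩ = (σ ⟨a, ha⟩)⁻¹ := map_inv₀ σ ⟨a, ha⟩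
    erw [h1]
    exact inv_mem iha
  | mul a b ha hb iha ihb =>
    have h1 : σ ⟨a * b, _⟩ = σ ⟨a, ha⟩ * σ ⟨b, hb⟩ := map_mul σ ⟨a, ha⟩ ⟨b, hb⟩
    erw [h1]
    exact mul_mem iha ihb



/-- restrict an algebra hom to an endomorphism of the intermediate field -/
noncomputable def restrictHom (F : IntermediateField ℚ ℂ) (σ : F →ₐ[ℚ] ℂ)
    (hmem : ∀ x : F, σ x ∈ F) : F →ₐ[ℚ] F where
  toFun := fun x => ⟨σ x, hmem x⟩
  map_one' := Subtype.ext (map_one σ)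
  map_mul' := fun x y => Subtype.ext (map_mul σ x y)
  map_zero' := Subtype.ext (map_zero σ)
  map_add' := fun x y => Subtype.ext (map_add σ x y)
  commutes' := fun q => Subtype.ext (σ.commutes q)

@[simp] lemma restrictHom_coe (F : IntermediateField ℚ ℂ) (σ : F →ₐ[ℚ] ℂ)
    (hmem : ∀ x : F, σ x ∈ F) (x : F) : (restrictHom F σ hmem x : ℂ) = σ x := rfl

open Polynomial IntermediateField in
/-- For `n = 5` or `n ≥ 7` with `n ∉ {8, 12, 24}`, the identity
`(n/4) cot (π/n) = √r₁ ± √r₂ ± ⋯ ± √rₙ` is impossible with the `rᵢ`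
nonnegative rationals. -/
theorem no_sqrt_sum_identity_for_cot (n : ℕ) (hn : n = 5 ∨ 7 ≤ n)
    (h8 : n ≠ 8) (h12 : n ≠ 12) (h24 : n ≠ 24) :
    ¬ ∃ (r : Fin n → ℚ) (ε : Fin n → ℝ), (∀ i, 0 ≤ r i) ∧
      (∀ i, ε i = 1 ∨ ε i = -1) ∧ ε ⟨0, by omega⟩ = 1 ∧
      (n : ℝ) / 4 * Real.cot (Real.pi / (n : ℝ)) = ∑ i, ε i * Real.sqrt ((r i : ℝ)) := by
  rintro ⟨r, ε, hr, hε, -, heq⟩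
  obtain ⟨k, hkodd, hkcop, hkdvd⟩ := exists_good_k n hn h8 h12 h24
  have hn5 : 5 ≤ n := by omega
  have hnR : (0:ℝ) < n := by exact_mod_cast (by omega : 0 < n)
  have hπ := Real.pi_pos
  have hN0 : 4 * n ≠ 0 := by omega
  -- mod-n arithmetic for k²
  set m : ℕ := k ^ 2 % n with hmdef
  set q : ℕ := k ^ 2 / n with hqdef
  have hqm : n * q + m = k ^ 2 := Nat.div_add_mod (k ^ 2) n
  have hmn : m < n := Nat.mod_lt _ (by omega)
  have hm0 : 0 < m := by
    rcases Nat.eq_zero_or_pos m with h0 | h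
    · exfalso
      have hdvd : n ∣ k ^ 2 := ⟨q, by omega⟩
      have := Nat.eq_one_of_dvd_coprimes (Nat.Coprime.pow_left 2 hkcop) hdvd dvd_rfl
      omega
    · exact h
  have hm1 : m ≠ 1 := fun h1 => hkdvd ⟨q, by omega⟩
  have hk41 : k ^ 2 % 4 = 1 := by
    obtain ⟨j, hj⟩ := hkodd
    have : k ^ 2 = 4 * (j * j + j) + 1 := by subst hj; ring
    omega
  have hk2 : ¬ (2 ∣ k) := by have := Nat.odd_iff.mp hkodd; omega
  have hkN : Nat.Coprime k (4 * n) := by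
    have c2 : Nat.Coprime k 2 := ((Nat.Prime.coprime_iff_not_dvd Nat.prime_two).mpr hk2).symm
    have c4 : Nat.Coprime k 4 := by
      have h4 : (4:ℕ) = 2 * 2 := rfl
      rw [h4]; exact Nat.Coprime.mul_right c2 c2
    exact Nat.Coprime.mul_right c4 hkcop
  -- the root of unity and the square roots
  set ζ : ℂ := Complex.exp (2 * Real.pi * Complex.I / ((4 * n : ℕ) : ℂ)) with hζdef
  have hζ : IsPrimitiveRoot ζ (4 * n) := Complex.isPrimitiveRoot_exp _ hN0
  set v : Fin n → ℂ := fun i => ((Real.sqrt ((r i : ℝ)) : ℝ) : ℂ) with hvdef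
  have hsqrt2 : ∀ i : Fin n, (v i) ^ 2 = ((r i : ℚ) : ℂ) := by
    intro i
    have h1 : (Real.sqrt ((r i : ℝ))) ^ 2 = ((r i : ℝ)) := Real.sq_sqrt (by exact_mod_cast hr i)
    calc (v i) ^ 2 = (((Real.sqrt ((r i : ℝ))) ^ 2 : ℝ) : ℂ) := by rw [hvdef]; push_cast; ring
      _ = (((r i : ℝ)) : ℂ) := by rw [h1]
      _ = ((r i : ℚ) : ℂ) := by push_cast; ring
  have hζint : IsIntegral ℚ ζ := by
    refine ⟨X ^ (4 * n) - C 1, monic_X_pow_sub_C 1 hN0, ?_⟩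
    simp [hζ.pow_eq_one]
  have hvint : ∀ i, IsIntegral ℚ (v i) := by
    intro i
    refine ⟨X ^ 2 - C (r i), monic_X_pow_sub_C _ two_ne_zero, ?_⟩
    simp [hsqrt2 i]
  have hmin : aeval (ζ ^ k) (minpoly ℚ ζ) = 0 := by
    rw [← Polynomial.cyclotomic_eq_minpoly_rat hζ (by omega : 0 < 4 * n)]
    have hprim : IsPrimitiveRoot (ζ ^ k) (4 * n) := hζ.pow_of_coprime k hkN
    have hroot := hprim.isRoot_cyclotomic (by omega : 0 < 4 * n)
    rwa [Polynomial.aeval_def, ← Polynomial.eval_map, Polynomial.map_cyclotomic]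
  obtain ⟨σ, hσmem, hσζ, hσs⟩ := exists_sigma ζ v k hζint hvint r hsqrt2 hmin
  have hζF : ζ ∈ IntermediateField.adjoin ℚ (insert ζ (Set.range v)) :=
    subset_adjoin ℚ _ (Set.mem_insert _ _)
  have hsF : ∀ i, v i ∈ IntermediateField.adjoin ℚ (insert ζ (Set.range v)) := fun i =>
    subset_adjoin ℚ _ (Set.mem_insert_of_mem _ ⟨i, rfl⟩)
  set τ := restrictHom _ σ hσmem with hτdef
  set zel : ↥(IntermediateField.adjoin ℚ (insert ζ (Set.range v))) := ⟨ζ, hζF⟩ with hzeldef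
  set sel : Fin n → ↥(IntermediateField.adjoin ℚ (insert ζ (Set.range v))) :=
    fun i => ⟨v i, hsF i⟩ with hseldef
  have hτzel : τ zel = zel ^ k := by
    apply Subtype.ext
    rw [hτdef, restrictHom_coe]
    have h1 : σ zel = ζ ^ k := hσζ
    rw [h1]
    push_cast
    rfl
  have hττzel : τ (τ zel) = zel ^ (k ^ 2) := by
    rw [hτzel, map_pow, hτzel, ← pow_mul, ← pow_two]
  have hττsel : ∀ i, τ (τ (sel i)) = sel i := by
    intro i
    rcases hσs i with h | h
    · have h' : τ (sel i) = sel i := Subtype.ext (by rw [hτdef, restrictHom_coe]; exact h)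
      rw [h', h']
    · have h' : τ (sel i) = -(sel i) := by
        apply Subtype.ext
        rw [hτdef, restrictHom_coe]
        push_cast
        exact h
      rw [h', map_neg, h', neg_neg]
  -- the element w
  set w := ∑ i : Fin n, (if ε i = 1 then sel i else -(sel i)) with hwdef
  have hττw : τ (τ w) = w := by
    rw [hwdef, map_sum, map_sum]
    refine Finset.sum_congr rfl fun i _ => ?_
    by_cases hi : ε i = 1
    · rw [if_pos hi, hττsel i]
    · rw [if_neg hi, map_neg, map_neg, hττsel i]
  have hwval : (w : ℂ) = (((n : ℝ) / 4 * Real.cot (Real.pi / (n : ℝ)) : ℝ) : ℂ) := by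
    rw [heq, hwdef]
    rw [AddSubmonoidClass.coe_finset_sum]
    push_cast
    refine Finset.sum_congr rfl fun i _ => ?_
    by_cases hi : ε i = 1
    · rw [if_pos hi, hi]
      push_cast
      simp [hvdef, hseldef]
    · have hi' : ε i = -1 := (hε i).resolve_left hi
      rw [if_neg hi, hi']
      push_cast
      simp [hvdef, hseldef]
  -- the rational-function elements
  have hval_celem : ∀ j : ℕ,
      (((((n : ℕ) : ↥(IntermediateField.adjoin ℚ (insert ζ (Set.range v)))) / 4 *
        ((zel ^ j) ^ n * (((zel ^ j) ^ 4 + 1) / ((zel ^ j) ^ 4 - 1)))) :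
          ↥(IntermediateField.adjoin ℚ (insert ζ (Set.range v)))) : ℂ) =
      (((n : ℕ) : ℂ)) / 4 * ((ζ ^ j) ^ n * (((ζ ^ j) ^ 4 + 1) / ((ζ ^ j) ^ 4 - 1))) := by
    intro j
    have hcv : ∀ y : ↥(IntermediateField.adjoin ℚ (insert ζ (Set.range v))),
        ((y : ℂ)) = (IntermediateField.adjoin ℚ (insert ζ (Set.range v))).val y := fun _ => rfl
    rw [hcv]
    simp only [map_mul, map_div₀, map_pow, map_add, map_sub, map_natCast, map_ofNat, map_one]
    rfl
  have h1n : 0 < 1 % n := by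
    rw [Nat.mod_eq_of_lt (by omega : 1 < n)]; omega
  have hcot1 : (((((n : ℕ) : ↥(IntermediateField.adjoin ℚ (insert ζ (Set.range v)))) / 4 *
        ((zel ^ 1) ^ n * (((zel ^ 1) ^ 4 + 1) / ((zel ^ 1) ^ 4 - 1)))) :
          ↥(IntermediateField.adjoin ℚ (insert ζ (Set.range v)))) : ℂ) =
      (((n:ℝ) / 4 * Real.cot (((1:ℕ):ℝ) * Real.pi / (n:ℝ)) : ℝ) : ℂ) := by
    rw [hval_celem 1, zeta_pow_cot n 1 hn5 (by norm_num) h1n]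
    push_cast
    ring
  have hcot2 : (((((n : ℕ) : ↥(IntermediateField.adjoin ℚ (insert ζ (Set.range v)))) / 4 *
        ((zel ^ (k ^ 2)) ^ n * (((zel ^ (k ^ 2)) ^ 4 + 1) / ((zel ^ (k ^ 2)) ^ 4 - 1)))) :
          ↥(IntermediateField.adjoin ℚ (insert ζ (Set.range v)))) : ℂ) =
      (((n:ℝ) / 4 * Real.cot (((k ^ 2:ℕ):ℝ) * Real.pi / (n:ℝ)) : ℝ) : ℂ) := by
    rw [hval_celem (k ^ 2), zeta_pow_cot n (k ^ 2) hn5 hk41 (by rw [← hmdef]; omega)]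
    push_cast
    ring
  have hw_eq : w = ((((n : ℕ) : ↥(IntermediateField.adjoin ℚ (insert ζ (Set.range v)))) / 4 *
        ((zel ^ 1) ^ n * (((zel ^ 1) ^ 4 + 1) / ((zel ^ 1) ^ 4 - 1)))) :
          ↥(IntermediateField.adjoin ℚ (insert ζ (Set.range v)))) := by
    apply Subtype.ext
    rw [hwval, hcot1]
    norm_num
  have hτcel : τ (τ ((((n : ℕ) : ↥(IntermediateField.adjoin ℚ (insert ζ (Set.range v)))) / 4 *
        ((zel ^ 1) ^ n * (((zel ^ 1) ^ 4 + 1) / ((zel ^ 1) ^ 4 - 1)))) :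
          ↥(IntermediateField.adjoin ℚ (insert ζ (Set.range v)))))
      = ((((n : ℕ) : ↥(IntermediateField.adjoin ℚ (insert ζ (Set.range v)))) / 4 *
        ((zel ^ (k ^ 2)) ^ n * (((zel ^ (k ^ 2)) ^ 4 + 1) / ((zel ^ (k ^ 2)) ^ 4 - 1)))) :
          ↥(IntermediateField.adjoin ℚ (insert ζ (Set.range v)))) := by
    simp only [map_mul, map_div₀, map_pow, map_add, map_sub, map_natCast, map_ofNat, map_one,
      pow_one, hττzel]
  have hfinal : (((n:ℝ) / 4 * Real.cot (((k ^ 2:ℕ):ℝ) * Real.pi / (n:ℝ)) : ℝ) : ℂ)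
      = (((n:ℝ) / 4 * Real.cot (Real.pi / (n:ℝ)) : ℝ) : ℂ) := by
    rw [← hcot2, ← hτcel, ← hw_eq, hττw, hwval]
  have hreal : (n:ℝ) / 4 * Real.cot (((k ^ 2:ℕ):ℝ) * Real.pi / (n:ℝ))
      = (n:ℝ) / 4 * Real.cot (Real.pi / (n:ℝ)) := by exact_mod_cast hfinal
  have hne : (n:ℝ) / 4 ≠ 0 := by positivity
  have hcot : Real.cot (((k ^ 2:ℕ):ℝ) * Real.pi / (n:ℝ)) = Real.cot (Real.pi / (n:ℝ)) :=
    mul_left_cancel₀ hne hreal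
  have hdec : ((k ^ 2:ℕ):ℝ) * Real.pi / (n:ℝ) = (q:ℝ) * Real.pi + ((m:ℕ):ℝ) * Real.pi / (n:ℝ) := by
    have hcast : ((k ^ 2:ℕ):ℝ) = (n:ℝ) * (q:ℝ) + (m:ℝ) := by exact_mod_cast hqm.symm
    rw [hcast]
    field_simp
  have hcotm : Real.cot (((m:ℕ):ℝ) * Real.pi / (n:ℝ)) = Real.cot (((1:ℕ):ℝ) * Real.pi / (n:ℝ)) := by
    calc Real.cot (((m:ℕ):ℝ) * Real.pi / (n:ℝ))
        = Real.cot ((q:ℝ) * Real.pi + ((m:ℕ):ℝ) * Real.pi / (n:ℝ)) :=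
          (cot_nat_mul_pi_add q _).symm
      _ = Real.cot (((k ^ 2:ℕ):ℝ) * Real.pi / (n:ℝ)) := by rw [hdec]
      _ = Real.cot (Real.pi / (n:ℝ)) := hcot
      _ = Real.cot (((1:ℕ):ℝ) * Real.pi / (n:ℝ)) := by norm_num
  have := cot_inj_nat m 1 n hm0 hmn one_pos (by omega) hcotm
  exact hm1 this
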